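/- Define f(x,y) = (1 + x + y, x/(1+y)) on ℂ² (where y ≠ −1), V₁(x,y) = (1 − 2x + 3y + 2y²)/(1+y) and V₂(x,y) = (1 + 2x + 3y + 2y²)/(2(1+y)). Then V₁(f(x,y)) = −V₁(x,y) and V₂(f(x,y)) = V₂(x,y) + 1 wherever defined. In particular W(x,y) = V₁(x,y)² satisfies W(f(x,y)) = W(x,y), i.e., W is a first integral of f. -/
import Mathlib

theorem stmt_9 (x y : ℂ) (h1 : 1 + y ≠ 0) (h2 : 1 + x / (1 + y) ≠ 0) :
    let V₁ : ℂ → ℂ → ℂ := fun u v => (1 - 2 * u + 3 * v + 2 * v ^ 2) / (1 + v)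
    let V₂ : ℂ → ℂ → ℂ := fun u v =>
      (1 + 2 * u + 3 * v + 2 * v ^ 2) / (2 * (1 + v))
    let W : ℂ → ℂ → ℂ := fun u v => (V₁ u v) ^ 2
    V₁ (1 + x + y) (x / (1 + y)) = -V₁ x y ∧
      V₂ (1 + x + y) (x / (1 + y)) = V₂ x y + 1 ∧
      W (1 + x + y) (x / (1 + y)) = W x y := by
  intro V₁ V₂ W
  have h2' : 1 + y + x ≠ 0 := by
    intro h
    apply h2
    field_simp
    linear_combination h
  refine ⟨?_, ?_, ?_⟩ <;> simp only [V₁, V₂, W] <;> field_simp <;> ring
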